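/- Let X be a topological space. A collection C of subsets of X is a complete closed base of X (i.e., a closed base containing ∅ and X, closed under finite unions and finite intersections) if and only if there exists a generalized topology Cov_X in X such that C is the collection of all closed sets of the generalized topological space (X, Cov_X). -/

import Mathlib

open Set TopologicalSpace Topology

universe u

/-- A generalized topology in the sense of Delfs–Knebusch (axioms following
Piękosz, Definition 2.2.1): `Cov` is the collection of admissible open families,
and the open sets are the members of `⋃₀ Cov`. -/
structure GenTop (X : Type u) : Type u where
  Cov : Set (Set (Set X))
  univ_open : Set.univ ∈ ⋃₀ Cov
  finite_admissible : ∀ 𝒰 : Set (Set X), 𝒰.Finite → 𝒰 ⊆ ⋃₀ Cov → 𝒰 ∈ Cov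
  union_open : ∀ 𝒰 ∈ Cov, ⋃₀ 𝒰 ∈ ⋃₀ Cov
  restrict : ∀ 𝒰 ∈ Cov, ∀ V ∈ ⋃₀ Cov, (fun U => V ∩ U) '' 𝒰 ∈ Cov
  transitive : ∀ 𝒰 ∈ Cov, ∀ f : Set X → Set (Set X),
    (∀ U ∈ 𝒰, f U ∈ Cov ∧ ⋃₀ f U = U) → {V : Set X | ∃ U ∈ 𝒰, V ∈ f U} ∈ Cov
  coarsen : ∀ 𝒰 ∈ Cov, ∀ 𝒱 ⊆ ⋃₀ Cov, (∀ U ∈ 𝒰, ∃ V ∈ 𝒱, U ⊆ V) →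
    ⋃₀ 𝒱 = ⋃₀ 𝒰 → 𝒱 ∈ Cov
  regular : ∀ 𝒰 ∈ Cov, ∀ W ⊆ ⋃₀ 𝒰, (∀ U ∈ 𝒰, W ∩ U ∈ ⋃₀ Cov) → W ∈ ⋃₀ Cov

namespace GenTop

variable {X : Type u} (G : GenTop X)

/-- The open sets of a gts. -/
def Opens : Set (Set X) := ⋃₀ G.Cov

/-- The closed sets of a gts. -/
def Closeds : Set (Set X) := {A : Set X | Aᶜ ∈ G.Opens}

/-- The topologization of a gts: the topology generated by the open sets. -/
def topol : TopologicalSpace X := TopologicalSpace.generateFrom G.Opens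

/-- A gts is weakly normal if disjoint sets, each a singleton or closed,
can be separated by disjoint open sets. -/
def WeaklyNormal : Prop :=
  ∀ A₁ A₂ : Set X, ((∃ x, A₁ = {x}) ∨ A₁ ∈ G.Closeds) →
    ((∃ x, A₂ = {x}) ∨ A₂ ∈ G.Closeds) → Disjoint A₁ A₂ →
    ∃ W₁ ∈ G.Opens, ∃ W₂ ∈ G.Opens, Disjoint W₁ W₂ ∧ A₁ ⊆ W₁ ∧ A₂ ⊆ W₂

end GenTop

/-- A closed base of a topological space. -/
def IsClosedBase {X : Type u} [TopologicalSpace X] (C : Set (Set X)) : Prop :=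
  (∀ A ∈ C, IsClosed A) ∧
  ∀ A : Set X, IsClosed A → ∀ x ∉ A, ∃ B ∈ C, x ∉ B ∧ A ⊆ B

/-- A complete closed base: a closed base containing `∅` and `univ`, closed
under finite unions and finite intersections. -/
def IsCompleteClosedBase {X : Type u} [TopologicalSpace X] (C : Set (Set X)) : Prop :=
  IsClosedBase C ∧ ∅ ∈ C ∧ Set.univ ∈ C ∧
  (∀ A ∈ C, ∀ B ∈ C, A ∪ B ∈ C) ∧ (∀ A ∈ C, ∀ B ∈ C, A ∩ B ∈ C)

/-- A Wallman base of a topological space. -/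
def IsWallmanBase {X : Type u} [TopologicalSpace X] (C : Set (Set X)) : Prop :=
  IsClosedBase C ∧
  (∀ A ∈ C, ∀ B ∈ C, A ∪ B ∈ C) ∧ (∀ A ∈ C, ∀ B ∈ C, A ∩ B ∈ C) ∧
  (∀ A : Set X, ((∃ x, A = {x}) ∨ IsClosed A) → ∀ x ∉ A, ∃ B ∈ C, x ∈ B ∧ B ⊆ Aᶜ) ∧
  (∀ A₁ ∈ C, ∀ A₂ ∈ C, Disjoint A₁ A₂ →
    ∃ C₁ ∈ C, ∃ C₂ ∈ C, C₁ ∪ C₂ = Set.univ ∧ A₁ ∩ C₁ = ∅ ∧ A₂ ∩ C₂ = ∅)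


section Aux

open Set

variable {X : Type u}

/-- Auxiliary: admissible families built from a family `O` of "open" sets. -/
def mkCov (O : Set (Set X)) : Set (Set (Set X)) :=
  {𝒰 | 𝒰 ⊆ O ∧ ∃ 𝒱 ⊆ 𝒰, 𝒱.Finite ∧ ⋃₀ 𝒱 = ⋃₀ 𝒰}

theorem sUnion_mkCov (O : Set (Set X)) : ⋃₀ mkCov O = O := by
  apply subset_antisymm
  · rintro U ⟨𝒰, ⟨h𝒰, -⟩, hU⟩
    exact h𝒰 hU
  · intro U hU
    exact ⟨{U}, ⟨singleton_subset_iff.mpr hU, {U}, Subset.rfl, finite_singleton U, rfl⟩,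
      mem_singleton U⟩

theorem sUnion_mem_of_finite {O : Set (Set X)} (h0 : ∅ ∈ O)
    (hcup : ∀ A ∈ O, ∀ B ∈ O, A ∪ B ∈ O) :
    ∀ 𝒱 : Set (Set X), 𝒱.Finite → 𝒱 ⊆ O → ⋃₀ 𝒱 ∈ O := by
  intro 𝒱 hfin
  refine Set.Finite.induction_on (motive := fun s _ => s ⊆ O → ⋃₀ s ∈ O) _ hfin (fun _ => by simpa using h0) ?_
  intro U 𝒱' _ _ ih hsub
  rw [sUnion_insert]
  exact hcup U (hsub (mem_insert _ _)) _ (ih fun V hV => hsub (mem_insert_of_mem _ hV))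

/-- The generalized topology built from a family `O` of "open" sets containing
`∅` and `univ` and closed under binary unions and intersections. -/
def mkGenTop (O : Set (Set X)) (h0 : ∅ ∈ O) (huniv : Set.univ ∈ O)
    (hcup : ∀ A ∈ O, ∀ B ∈ O, A ∪ B ∈ O) (hcap : ∀ A ∈ O, ∀ B ∈ O, A ∩ B ∈ O) :
    GenTop X where
  Cov := mkCov O
  univ_open := by rw [sUnion_mkCov]; exact huniv
  finite_admissible := by
    intro 𝒰 hfin hsub
    rw [sUnion_mkCov] at hsub
    exact ⟨hsub, 𝒰, Subset.rfl, hfin, rfl⟩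
  union_open := by
    rintro 𝒰 ⟨hsub, 𝒱, h𝒱𝒰, hfin, heq⟩
    rw [sUnion_mkCov, ← heq]
    exact sUnion_mem_of_finite h0 hcup 𝒱 hfin (h𝒱𝒰.trans hsub)
  restrict := by
    rintro 𝒰 ⟨hsub, 𝒱, h𝒱𝒰, hfin, heq⟩ V hV
    rw [sUnion_mkCov] at hV
    refine ⟨?_, (fun U => V ∩ U) '' 𝒱, image_mono h𝒱𝒰, hfin.image _, ?_⟩
    · rintro W ⟨U, hU, rfl⟩
      exact hcap V hV U (hsub hU)
    · ext x
      simp only [sUnion_image, mem_iUnion, mem_inter_iff, exists_prop]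
      constructor
      · rintro ⟨U, hU, hx, hxU⟩
        exact ⟨U, h𝒱𝒰 hU, hx, hxU⟩
      · rintro ⟨U, hU, hx, hxU⟩
        have hx𝒱 : x ∈ ⋃₀ 𝒱 := heq ▸ ⟨U, hU, hxU⟩
        obtain ⟨U', hU', hxU'⟩ := hx𝒱
        exact ⟨U', hU', hx, hxU'⟩
  transitive := by
    rintro 𝒰 ⟨hsub, 𝒱, h𝒱𝒰, hfin, heq⟩ f hf
    have hfO : ∀ U ∈ 𝒰, f U ⊆ O := fun U hU => (hf U hU).1.1
    have hchoice : ∀ U ∈ 𝒱, ∃ 𝒲 ⊆ f U, 𝒲.Finite ∧ ⋃₀ 𝒲 = U := by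
      intro U hU
      obtain ⟨-, 𝒲, h𝒲f, h𝒲fin, h𝒲eq⟩ := (hf U (h𝒱𝒰 hU)).1
      exact ⟨𝒲, h𝒲f, h𝒲fin, h𝒲eq.trans (hf U (h𝒱𝒰 hU)).2⟩
    choose! g hg1 hg2 hg3 using hchoice
    have hsubT : {V : Set X | ∃ U ∈ 𝒰, V ∈ f U} ⊆ O := by
      rintro V ⟨U, hU, hV⟩; exact hfO U hU hV
    have hVU : ∀ V ∈ {V : Set X | ∃ U ∈ 𝒰, V ∈ f U}, V ⊆ ⋃₀ 𝒰 := by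
      rintro V ⟨U, hU, hV⟩
      exact ((hf U hU).2 ▸ subset_sUnion_of_mem hV).trans (subset_sUnion_of_mem hU)
    refine ⟨hsubT, ⋃ U ∈ 𝒱, g U, ?_, hfin.biUnion hg2, ?_⟩
    · rintro V hV
      simp only [mem_iUnion, exists_prop] at hV
      obtain ⟨U, hU, hV⟩ := hV
      exact ⟨U, h𝒱𝒰 hU, hg1 U hU hV⟩
    · apply subset_antisymm
      · rintro x ⟨V, hV, hxV⟩
        simp only [mem_iUnion, exists_prop] at hV
        obtain ⟨U, hU, hV⟩ := hV
        have hxU : x ∈ U := (hg3 U hU) ▸ ⟨V, hV, hxV⟩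
        have hx : x ∈ ⋃₀ 𝒰 := ⟨U, h𝒱𝒰 hU, hxU⟩
        exact ⟨V, ⟨U, h𝒱𝒰 hU, hg1 U hU hV⟩, hxV⟩
      · rintro x ⟨V, hV, hxV⟩
        have hx : x ∈ ⋃₀ 𝒰 := hVU V hV hxV
        have hx𝒱 : x ∈ ⋃₀ 𝒱 := heq ▸ hx
        obtain ⟨U', hU', hxU'⟩ := hx𝒱
        have hxg : x ∈ ⋃₀ g U' := (hg3 U' hU').symm ▸ hxU'
        obtain ⟨V', hV', hxV'⟩ := hxg
        refine ⟨V', ?_, hxV'⟩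
        simp only [mem_iUnion, exists_prop]
        exact ⟨U', hU', hV'⟩
  coarsen := by
    rintro 𝒰 ⟨hsub, 𝒲, h𝒲𝒰, hfin, heq⟩ 𝒱 h𝒱 hcov hun
    rw [sUnion_mkCov] at h𝒱
    have hch : ∀ U ∈ 𝒲, ∃ V ∈ 𝒱, U ⊆ V := fun U hU => hcov U (h𝒲𝒰 hU)
    choose! g hg1 hg2 using hch
    refine ⟨h𝒱, g '' 𝒲, ?_, hfin.image _, ?_⟩
    · rintro V ⟨U, hU, rfl⟩; exact hg1 U hU
    · apply subset_antisymm
      · rintro x ⟨V, ⟨U, hU, rfl⟩, hxV⟩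
        exact ⟨g U, hg1 U hU, hxV⟩
      · intro x hx
        have hx𝒲 : x ∈ ⋃₀ 𝒲 := heq ▸ (hun ▸ hx)
        obtain ⟨U, hU, hxU⟩ := hx𝒲
        exact ⟨g U, ⟨U, hU, rfl⟩, hg2 U hU hxU⟩
  regular := by
    rintro 𝒰 ⟨hsub, 𝒱, h𝒱𝒰, hfin, heq⟩ W hWsub hW
    rw [sUnion_mkCov]
    simp only [sUnion_mkCov] at hW
    have hWeq : W = ⋃₀ ((fun U => W ∩ U) '' 𝒱) := by
      apply subset_antisymm
      · intro x hx
        have hx𝒱 : x ∈ ⋃₀ 𝒱 := heq ▸ hWsub hx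
        obtain ⟨U, hU, hxU⟩ := hx𝒱
        exact ⟨W ∩ U, ⟨U, hU, rfl⟩, hx, hxU⟩
      · rintro x ⟨V, ⟨U, hU, rfl⟩, hx, -⟩
        exact hx
    rw [hWeq]
    apply sUnion_mem_of_finite h0 hcup _ (hfin.image _)
    rintro V ⟨U, hU, rfl⟩
    exact hW U (h𝒱𝒰 hU)

theorem mkGenTop_Opens (O : Set (Set X)) (h0 : ∅ ∈ O) (huniv : Set.univ ∈ O)
    (hcup : ∀ A ∈ O, ∀ B ∈ O, A ∪ B ∈ O) (hcap : ∀ A ∈ O, ∀ B ∈ O, A ∩ B ∈ O) :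
    (mkGenTop O h0 huniv hcup hcap).Opens = O :=
  sUnion_mkCov O

end Aux

/-- A collection `C` is a complete closed base of a topological space `X` iff
there is a generalized topology on `X`, inducing the topology of `X`, whose
closed sets are exactly `C`. -/
theorem stmt_0 {X : Type u} [t : TopologicalSpace X] (C : Set (Set X)) :
    IsCompleteClosedBase C ↔ ∃ G : GenTop X, C = G.Closeds ∧ G.topol = t := by
  constructor
  · rintro ⟨⟨hclosed, hbase⟩, hempty, huniv, hunion, hinter⟩
    have h0 : ∅ ∈ compl '' C := ⟨Set.univ, huniv, compl_univ⟩
    have hu : Set.univ ∈ compl '' C := ⟨∅, hempty, compl_empty⟩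
    have hcup : ∀ A ∈ compl '' C, ∀ B ∈ compl '' C, A ∪ B ∈ compl '' C := by
      rintro _ ⟨A, hA, rfl⟩ _ ⟨B, hB, rfl⟩
      exact ⟨A ∩ B, hinter A hA B hB, compl_inter A B⟩
    have hcap : ∀ A ∈ compl '' C, ∀ B ∈ compl '' C, A ∩ B ∈ compl '' C := by
      rintro _ ⟨A, hA, rfl⟩ _ ⟨B, hB, rfl⟩
      exact ⟨A ∪ B, hunion A hA B hB, compl_union A B⟩
    refine ⟨mkGenTop (compl '' C) h0 hu hcup hcap, ?_, ?_⟩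
    · ext A
      simp only [GenTop.Closeds, mem_setOf_eq, mkGenTop_Opens]
      constructor
      · intro hA
        exact ⟨A, hA, rfl⟩
      · rintro ⟨B, hB, hBA⟩
        exact (compl_inj_iff.mp hBA) ▸ hB
    · have hopen : ∀ U ∈ compl '' C, IsOpen U := by
        rintro _ ⟨A, hA, rfl⟩
        exact (hclosed A hA).isOpen_compl
      apply TopologicalSpace.ext
      funext U
      apply propext
      constructor
      · -- generated open is t-open
        intro hU
        have hU' : TopologicalSpace.GenerateOpen
            ((mkGenTop (compl '' C) h0 hu hcup hcap).Opens) U := hU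
        clear hU
        induction hU' with
        | basic V hV => rw [mkGenTop_Opens] at hV; exact hopen V hV
        | univ => exact isOpen_univ
        | inter _ _ _ _ ih₁ ih₂ => exact ih₁.inter ih₂
        | sUnion _ _ ih => exact isOpen_sUnion ih
      · -- every t-open set is generated
        intro hU
        have hUgen : ∀ x ∈ U, ∃ W ∈ compl '' C, x ∈ W ∧ W ⊆ U := by
          intro x hx
          obtain ⟨B, hB, hxB, hUB⟩ := hbase Uᶜ (isClosed_compl_iff.mpr hU) x (by simpa using hx)
          exact ⟨Bᶜ, ⟨B, hB, rfl⟩, hxB, by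
            intro y hy
            by_contra hyU
            exact hy (hUB hyU)⟩
        have : U = ⋃₀ {W | W ∈ compl '' C ∧ W ⊆ U} := by
          apply subset_antisymm
          · intro x hx
            obtain ⟨W, hW, hxW, hWU⟩ := hUgen x hx
            exact ⟨W, ⟨hW, hWU⟩, hxW⟩
          · rintro x ⟨W, ⟨-, hWU⟩, hxW⟩
            exact hWU hxW
        rw [this]
        show TopologicalSpace.GenerateOpen _ _
        apply TopologicalSpace.GenerateOpen.sUnion
        rintro W ⟨hW, -⟩
        rw [mkGenTop_Opens]
        exact TopologicalSpace.GenerateOpen.basic W hW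
  · rintro ⟨G, rfl, rfl⟩
    letI : TopologicalSpace X := G.topol
    have h0 : ∅ ∈ G.Opens := by
      have hmem : (∅ : Set (Set X)) ∈ G.Cov :=
        G.finite_admissible ∅ finite_empty (empty_subset _)
      have h := G.union_open ∅ hmem
      rw [sUnion_empty] at h
      exact h
    have hu : Set.univ ∈ G.Opens := G.univ_open
    have hcap : ∀ U ∈ G.Opens, ∀ V ∈ G.Opens, U ∩ V ∈ G.Opens := by
      intro U hU V hV
      have h1 : ({V} : Set (Set X)) ∈ G.Cov :=
        G.finite_admissible {V} (finite_singleton V) (singleton_subset_iff.mpr hV)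
      have h2 := G.restrict {V} h1 U hU
      have himg : (fun W => U ∩ W) '' {V} = {U ∩ V} := by simp
      rw [himg] at h2
      exact ⟨{U ∩ V}, h2, mem_singleton _⟩
    have hcup : ∀ U ∈ G.Opens, ∀ V ∈ G.Opens, U ∪ V ∈ G.Opens := by
      intro U hU V hV
      have h1 : ({U, V} : Set (Set X)) ∈ G.Cov :=
        G.finite_admissible {U, V} (by simp) (by
          rintro W hW
          rcases hW with rfl | rfl
          exacts [hU, hV])
      have h2 := G.union_open _ h1
      rwa [sUnion_pair] at h2
    have hopen : ∀ U ∈ G.Opens, IsOpen[G.topol] U := fun U hU =>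
      TopologicalSpace.GenerateOpen.basic U hU
    have hbase : ∀ U : Set X, IsOpen[G.topol] U → ∀ x ∈ U, ∃ W ∈ G.Opens, x ∈ W ∧ W ⊆ U := by
      intro U hU
      induction hU with
      | basic V hV => exact fun x hx => ⟨V, hV, hx, Subset.rfl⟩
      | univ => exact fun x _ => ⟨Set.univ, hu, mem_univ x, Subset.rfl⟩
      | inter V₁ V₂ _ _ ih₁ ih₂ =>
        intro x hx
        obtain ⟨W₁, hW₁, hxW₁, hW₁V⟩ := ih₁ x hx.1
        obtain ⟨W₂, hW₂, hxW₂, hW₂V⟩ := ih₂ x hx.2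
        exact ⟨W₁ ∩ W₂, hcap W₁ hW₁ W₂ hW₂, ⟨hxW₁, hxW₂⟩,
          inter_subset_inter hW₁V hW₂V⟩
      | sUnion S _ ih =>
        rintro x ⟨V, hV, hxV⟩
        obtain ⟨W, hW, hxW, hWV⟩ := ih V hV x hxV
        exact ⟨W, hW, hxW, hWV.trans (subset_sUnion_of_mem hV)⟩
    refine ⟨⟨?_, ?_⟩, ?_, ?_, ?_, ?_⟩
    · intro A hA
      exact isOpen_compl_iff.mp (hopen Aᶜ hA)
    · intro A hA x hx
      have hAc : IsOpen[G.topol] Aᶜ := hA.isOpen_compl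
      obtain ⟨W, hW, hxW, hWA⟩ := hbase Aᶜ hAc x hx
      refine ⟨Wᶜ, by simpa [GenTop.Closeds] using hW, by simpa using hxW, ?_⟩
      intro y hy
      intro hyW
      exact hWA hyW hy
    · show (∅ : Set X)ᶜ ∈ G.Opens
      simpa using hu
    · show (Set.univ : Set X)ᶜ ∈ G.Opens
      simpa using h0
    · intro A hA B hB
      show (A ∪ B)ᶜ ∈ G.Opens
      rw [compl_union]
      exact hcap _ hA _ hB
    · intro A hA B hB
      show (A ∩ B)ᶜ ∈ G.Opens
      rw [compl_inter]
      exact hcup _ hA _ hB
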